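/- arXiv:1101.1490 — 5 statements merged into one kernel-verified Lean document; each statement's English description precedes it below -/
import Mathlib

section
/- Let φ be the morphism φ(A) = A^p B, φ(B) = A^q B with p > q ≥ 1. Define words w^(0) = B and w^(n) = B·φ(w^(n-1)) for n ≥ 1. Then every w^(N) is a palindrome. -/
/-- Number of occurrences of the letter `A` (encoded as `false`). -/
def countA (w : List Bool) : ℕ := w.count false

/-- Number of occurrences of the letter `B` (encoded as `true`). -/
def countB (w : List Bool) : ℕ := w.count true

/-- Extension of a morphism (given on letters) to finite words. -/
def applyM (φ : Bool → List Bool) (w : List Bool) : List Bool := (w.map φ).flatten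

/-- `w` is a factor of the infinite word `u`. -/
def IsFactor (u : ℕ → Bool) (w : List Bool) : Prop :=
  ∃ i, w = (List.range w.length).map (fun j => u (i + j))

/-- The prefix of length `n` of the infinite word `u`. -/
def prefWord (u : ℕ → Bool) (n : ℕ) : List Bool := (List.range n).map u

/-- The finite word `w` is a prefix of the infinite word `u`. -/
def IsPrefixOf (w : List Bool) (u : ℕ → Bool) : Prop := w = prefWord u w.length

/-- Abelian complexity: number of Parikh vectors of factors of length `n`. -/
noncomputable def AC (u : ℕ → Bool) (n : ℕ) : ℕ :=
  Set.ncard {P : ℕ × ℕ | ∃ w, IsFactor u w ∧ w.length = n ∧ P = (countA w, countB w)}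

/-- `n`-fold iterate of the morphism `φ` applied to the letter `a`. -/
def iterW (φ : Bool → List Bool) (n : ℕ) (a : Bool) : List Bool := (applyM φ)^[n] [a]

/-- The morphism `A ↦ AᵖB, B ↦ A^q` (simple Parry case). -/
def simpleM (p q : ℕ) : Bool → List Bool
  | false => List.replicate p false ++ [true]
  | true  => List.replicate q false

/-- The morphism `A ↦ AᵖB, B ↦ A^qB` (non-simple Parry case). -/
def nonsimpleM (p q : ℕ) : Bool → List Bool
  | false => List.replicate p false ++ [true]
  | true  => List.replicate q false ++ [true]

/-- Greedy digits `(d_N, …, d_0)` of `x` in the base given by `U`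
    (assuming `U 0 = 1`): `d_j = ⌊x_j / U_j⌋`, `x_{j-1} = x_j mod U_j`. -/
def gdigits (U : ℕ → ℕ) : ℕ → ℕ → List ℕ
  | 0, x => [x]
  | j+1, x => x / U (j+1) :: gdigits U j (x % U (j+1))

/-- The digit `d_j` of the normal `U`-representation `(d_N, …, d_0)` of `n`. -/
def dig (U : ℕ → ℕ) (N n j : ℕ) : ℕ := (gdigits U N n).getD (N - j) 0

/-- The words `w⁽ⁿ⁾` of the non-simple Parry case: `w⁽⁰⁾ = B`, `w⁽ⁿ⁾ = B·φ(w⁽ⁿ⁻¹⁾)`. -/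
def wNon (φ : Bool → List Bool) : ℕ → List Bool
  | 0 => [true]
  | n+1 => true :: applyM φ (wNon φ n)

/-- The words `w⁽ᴺ⁾ = B·φ(A^{q-1})·φ³(A^{q-1})⋯φ^{2N-1}(A^{q-1})` of the simple Parry case. -/
def wSim (φ : Bool → List Bool) (q : ℕ) (N : ℕ) : List Bool :=
  true :: ((List.range N).map
    (fun k => (applyM φ)^[2*k+1] (List.replicate (q-1) false))).flatten
lemma applyM_append (φ : Bool → List Bool) (u v : List Bool) :
    applyM φ (u ++ v) = applyM φ u ++ applyM φ v := by
  simp [applyM]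

lemma key (p q : ℕ) (w : List Bool) :
    (applyM (nonsimpleM p q) w).reverse ++ [true]
      = true :: applyM (nonsimpleM p q) w.reverse := by
  induction w with
  | nil => simp [applyM]
  | cons a w ih =>
    have h1 : (nonsimpleM p q a).reverse ++ [true] = true :: nonsimpleM p q a := by
      cases a <;> simp [nonsimpleM]
    calc (applyM (nonsimpleM p q) (a :: w)).reverse ++ [true]
        = (applyM (nonsimpleM p q) w).reverse ++ ((nonsimpleM p q a).reverse ++ [true]) := by
          simp [applyM]
      _ = ((applyM (nonsimpleM p q) w).reverse ++ [true]) ++ nonsimpleM p q a := by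
          rw [h1]; simp
      _ = (true :: applyM (nonsimpleM p q) w.reverse) ++ nonsimpleM p q a := by rw [ih]
      _ = true :: applyM (nonsimpleM p q) (a :: w).reverse := by
          simp [applyM_append, applyM]

/-- each `w⁽ᴺ⁾` (non-simple case) is a palindrome. -/
theorem stmt5 (p q : ℕ) (hq : 1 ≤ q) (hpq : q < p) (N : ℕ) :
    (wNon (nonsimpleM p q) N).reverse = wNon (nonsimpleM p q) N := by
  induction N with
  | zero => rfl
  | succ n ih =>
    show (true :: applyM (nonsimpleM p q) (wNon (nonsimpleM p q) n)).reverse = _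
    rw [List.reverse_cons, key, ih]
    rfl
end

section
/- Let φ be the morphism φ(A) = A^p B, φ(B) = A^q B with p > q ≥ 1. Define w^(0) = B and w^(n) = B·φ(w^(n-1)) for n ≥ 1. Then for every N ≥ 0, the word w^(N) is a proper suffix of φ^{N+1}(A); that is, φ^{N+1}(A) = u · w^(N) for some nonempty word u. -/
/-- `w⁽ᴺ⁾` is a proper suffix of `φ^{N+1}(A)` (non-simple case). -/
theorem stmt6 (p q : ℕ) (hq : 1 ≤ q) (hpq : q < p) (N : ℕ) :
    ∃ u : List Bool, u ≠ [] ∧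
      iterW (nonsimpleM p q) (N+1) false = u ++ wNon (nonsimpleM p q) N := by
  set φ := nonsimpleM p q with hφ
  have happ : ∀ x y : List Bool, applyM φ (x ++ y) = applyM φ x ++ applyM φ y := by
    intro x y; simp [applyM]
  induction N with
  | zero =>
    refine ⟨List.replicate p false, ?_, ?_⟩
    · simp only [ne_eq, List.replicate_eq_nil_iff]; omega
    · simp [iterW, applyM, wNon, hφ, nonsimpleM]
  | succ n ih =>
    obtain ⟨u, hu, heq⟩ := ih
    have key : iterW φ (n+2) false = applyM φ u ++ applyM φ (wNon φ n) := by
      have : iterW φ (n+2) false = applyM φ (iterW φ (n+1) false) := by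
        simp [iterW, Function.iterate_succ_apply']
      rw [this, heq, happ]
    -- decompose applyM φ u as v ++ [true] with v nonempty
    have hsplit : u = u.dropLast ++ [u.getLast hu] := (List.dropLast_append_getLast hu).symm
    set a := u.getLast hu with ha
    have hφa : ∃ k, 1 ≤ k ∧ φ a = List.replicate k false ++ [true] := by
      cases a with
      | false => exact ⟨p, by omega, rfl⟩
      | true => exact ⟨q, hq, rfl⟩
    obtain ⟨k, hk, hka⟩ := hφa
    have hφu : applyM φ u
        = (applyM φ u.dropLast ++ List.replicate k false) ++ [true] := by
      conv_lhs => rw [hsplit]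
      rw [happ, List.append_assoc]
      congr 1
      simp [applyM, hka]
    refine ⟨applyM φ u.dropLast ++ List.replicate k false, ?_, ?_⟩
    · intro h
      have := congrArg List.length h
      simp [List.length_replicate] at this
      omega
    · show iterW φ (n+1+1) false = _
      rw [key, hφu]
      simp [wNon]
end

section
/- Let φ be the morphism φ(A) = A^p B, φ(B) = A^q with integers p ≥ q ≥ 1, and let u_β be its fixed point lim φ^n(A). If B A^k B is a factor of u_β (with k ≥ 0), then k = p or k = q + p. -/
namespace Stmt10Aux

lemma applyM_cons (φ : Bool → List Bool) (a : Bool) (w : List Bool) :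
    applyM φ (a :: w) = φ a ++ applyM φ w := by
  simp [applyM]

lemma applyM_nil (φ : Bool → List Bool) : applyM φ [] = [] := rfl

lemma rep_ne_true {m : ℕ} (hm : 1 ≤ m) {u v : List Bool}
    (h : List.replicate m false ++ u = true :: v) : False := by
  obtain ⟨m', rfl⟩ : ∃ m', m = m' + 1 := ⟨m - 1, by omega⟩
  rw [List.replicate_succ] at h
  simp at h

lemma rep_le {q k : ℕ} {u v : List Bool}
    (h : List.replicate q false ++ u = List.replicate k false ++ true :: v) :
    q ≤ k ∧ u = List.replicate (k - q) false ++ true :: v := by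
  rcases Nat.lt_or_ge k q with h1 | h1
  · exfalso
    have hq : q = k + (q - k) := by omega
    rw [hq, List.replicate_add, List.append_assoc] at h
    exact rep_ne_true (by omega) (List.append_cancel_left h)
  · refine ⟨h1, ?_⟩
    have hk : k = q + (k - q) := by omega
    rw [hk, List.replicate_add, List.append_assoc] at h
    exact List.append_cancel_left h

lemma rep_match {k m : ℕ} {u v : List Bool}
    (h : List.replicate m false ++ true :: u = List.replicate k false ++ true :: v) :
    k = m ∧ u = v := by
  obtain ⟨h1, h2⟩ := rep_le h
  rcases Nat.lt_or_ge m k with h3 | h3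
  · exfalso; exact rep_ne_true (by omega) h2.symm
  · have : k = m := by omega
    subst this
    simp at h2
    exact ⟨rfl, h2⟩

lemma all_false (s : List Bool) (h : s.count true = 0) :
    s = List.replicate s.length false := by
  apply List.eq_replicate_length.mpr
  intro b hb
  cases b
  · rfl
  · exact absurd hb (List.count_eq_zero.mp h)

lemma suffix_of_phiA {p : ℕ} {s c : List Bool}
    (h : List.replicate p false ++ [true] = s ++ true :: c) : c = [] := by
  have hc := congrArg (List.count true) h
  simp [List.count_append, List.count_replicate, List.count_cons] at hc
  have hs0 : s.count true = 0 := by omega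
  rw [all_false s hs0] at h
  have h' : List.replicate p false ++ true :: ([] : List Bool) =
      List.replicate s.length false ++ true :: c := h
  exact (rep_match h').2.symm

lemma pref (p q : ℕ) :
    ∀ (w : List Bool) (k : ℕ) (t : List Bool),
      applyM (simpleM p q) w = List.replicate k false ++ true :: t →
      ∃ b rest, w = List.replicate b true ++ false :: rest ∧ k = b * q + p := by
  intro w
  induction w with
  | nil =>
    intro k t h
    rw [applyM_nil] at h
    have := congrArg List.length h
    simp at this
  | cons a w ih =>
    intro k t h
    rw [applyM_cons] at h
    cases a
    · -- a = false : φ(false) = A^p B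
      have h' : List.replicate p false ++ true :: applyM (simpleM p q) w =
          List.replicate k false ++ true :: t := by
        rw [← h]; simp [simpleM]
      obtain ⟨hkp, _⟩ := rep_match h'
      exact ⟨0, w, by simp, by omega⟩
    · -- a = true : φ(true) = A^q
      have h' : List.replicate q false ++ applyM (simpleM p q) w =
          List.replicate k false ++ true :: t := by
        rw [← h]; simp [simpleM]
      obtain ⟨hqk, h2⟩ := rep_le h'
      obtain ⟨b, rest, hw, hk⟩ := ih (k - q) t h2
      refine ⟨b + 1, rest, by rw [hw]; simp [List.replicate_succ], ?_⟩
      have : (b + 1) * q + p = (b * q + p) + q := by ring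
      omega

lemma applyM_head (p q : ℕ) (hp : 1 ≤ p) (hq : 1 ≤ q) (w : List Bool) :
    applyM (simpleM p q) w = [] ∨ ∃ r, applyM (simpleM p q) w = false :: r := by
  cases w with
  | nil => left; rfl
  | cons a w =>
    right
    rw [applyM_cons]
    cases a
    · obtain ⟨p', rfl⟩ : ∃ p', p = p' + 1 := ⟨p - 1, by omega⟩
      refine ⟨List.replicate p' false ++ [true] ++ applyM (simpleM (p' + 1) q) w, ?_⟩
      simp [simpleM, List.replicate_succ]
    · obtain ⟨q', rfl⟩ : ∃ q', q = q' + 1 := ⟨q - 1, by omega⟩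
      refine ⟨List.replicate q' false ++ applyM (simpleM p (q' + 1)) w, ?_⟩
      simp [simpleM, List.replicate_succ]

lemma nobb (p q : ℕ) (hp : 1 ≤ p) (hq : 1 ≤ q) :
    ∀ (w s t : List Bool), applyM (simpleM p q) w ≠ s ++ true :: true :: t := by
  intro w
  induction w with
  | nil =>
    intro s t h
    rw [applyM_nil] at h
    have := congrArg List.length h
    simp at this
  | cons a w ih =>
    intro s t h
    rw [applyM_cons] at h
    rcases List.append_eq_append_iff.mp h with ⟨a', hs, hX⟩ | ⟨c', hφ, hd⟩
    · exact ih a' t hX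
    · cases c' with
      | nil =>
        simp at hd
        exact ih [] t (by simpa using hd.symm)
      | cons x c'' =>
        rw [List.cons_append] at hd
        have hx : x = true := by
          have := congrArg List.headI hd
          simpa using this.symm
        subst hx
        have hd2 : true :: t = c'' ++ applyM (simpleM p q) w := by
          have := congrArg List.tail hd
          simpa using this
        cases a
        · -- φ(false) = A^p B
          have hc : c'' = [] := suffix_of_phiA (by simpa [simpleM] using hφ)
          subst hc
          simp at hd2
          rcases applyM_head p q hp hq w with he | ⟨r, hr⟩
          · rw [he] at hd2; exact absurd hd2 (by simp)
          · rw [hr] at hd2; simp at hd2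
        · -- φ(true) = A^q : contains no true
          have htm : (true : Bool) ∈ List.replicate q false := by
            have : (true : Bool) ∈ simpleM p q true := by rw [hφ]; simp
            simpa [simpleM] using this
          simp at htm

lemma gap (p q : ℕ) (hp : 1 ≤ p) (hq : 1 ≤ q) :
    ∀ (w s t : List Bool) (k : ℕ),
      applyM (simpleM p q) w = s ++ true :: (List.replicate k false ++ [true]) ++ t →
      (∀ s' t', w ≠ s' ++ true :: true :: t') →
      k = p ∨ k = q + p := by
  intro w
  induction w with
  | nil =>
    intro s t k h _
    rw [applyM_nil] at h
    have := congrArg List.length h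
    simp at this
  | cons a w ih =>
    intro s t k h hbb
    rw [applyM_cons, List.append_assoc] at h
    rcases List.append_eq_append_iff.mp h with ⟨a', hs, hX⟩ | ⟨c', hφ, hd⟩
    · refine ih a' t k (by rw [hX, List.append_assoc]) ?_
      intro s' t' hw
      exact hbb (a :: s') t' (by rw [hw]; rfl)
    · cases c' with
      | nil =>
        simp at hd
        refine ih [] t k (by simpa using hd.symm) ?_
        intro s' t' hw
        exact hbb (a :: s') t' (by rw [hw]; rfl)
      | cons x c'' =>
        rw [List.cons_append, List.cons_append] at hd
        have hx : x = true := by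
          have := congrArg List.headI hd
          simpa using this.symm
        subst hx
        have hd2 : (List.replicate k false ++ [true]) ++ t =
            c'' ++ applyM (simpleM p q) w := by
          have := congrArg List.tail hd
          simpa using this
        cases a
        · -- φ(false) = A^p B : so c'' = []
          have hc : c'' = [] := suffix_of_phiA (by simpa [simpleM] using hφ)
          subst hc
          simp at hd2
          have hd3 : applyM (simpleM p q) w = List.replicate k false ++ true :: t := by
            rw [← hd2]
          obtain ⟨b, rest, hw, hk⟩ := pref p q w k t hd3
          match b with
          | 0 => left; simpa using hk
          | 1 => right; rw [hk]; ring
          | (b + 2) =>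
            exfalso
            refine hbb [false] (List.replicate b true ++ false :: rest) ?_
            rw [hw]
            simp [List.replicate_succ]
        · -- φ(true) = A^q : contains no true
          have htm : (true : Bool) ∈ List.replicate q false := by
            have : (true : Bool) ∈ simpleM p q true := by rw [hφ]; simp
            simpa [simpleM] using this
          simp at htm

lemma iterW_succ (φ : Bool → List Bool) (m : ℕ) (a : Bool) :
    iterW φ (m + 1) a = applyM φ (iterW φ m a) := by
  simp [iterW, Function.iterate_succ_apply']

lemma iterW_head (p q : ℕ) (hp : 1 ≤ p) (hq : 1 ≤ q) (m : ℕ) :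
    ∃ r, iterW (simpleM p q) m false = false :: r := by
  induction m with
  | zero => exact ⟨[], rfl⟩
  | succ m ih =>
    obtain ⟨r, hr⟩ := ih
    rw [iterW_succ, hr, applyM_cons]
    obtain ⟨p', rfl⟩ : ∃ p', p = p' + 1 := ⟨p - 1, by omega⟩
    refine ⟨List.replicate p' false ++ [true] ++ applyM (simpleM (p' + 1) q) r, ?_⟩
    simp [simpleM, List.replicate_succ]

lemma applyM_len (p q : ℕ) (hp : 1 ≤ p) (hq : 1 ≤ q) (w : List Bool) :
    w.length ≤ (applyM (simpleM p q) w).length := by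
  induction w with
  | nil => simp [applyM]
  | cons a w ih =>
    rw [applyM_cons, List.length_append, List.length_cons]
    have : 1 ≤ (simpleM p q a).length := by
      cases a <;> simp [simpleM] <;> omega
    omega

lemma iterW_len (p q : ℕ) (hp : 1 ≤ p) (hq : 1 ≤ q) (m : ℕ) :
    m + 1 ≤ (iterW (simpleM p q) m false).length := by
  induction m with
  | zero => simp [iterW]
  | succ m ih =>
    obtain ⟨r, hr⟩ := iterW_head p q hp hq m
    have h3 : (iterW (simpleM p q) m false).length = r.length + 1 := by rw [hr]; rfl
    have h1 := applyM_len p q hp hq r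
    have h2 : (simpleM p q false).length = p + 1 := by simp [simpleM]
    rw [iterW_succ, hr, applyM_cons, List.length_append, h2]
    omega

lemma prefWord_add (u : ℕ → Bool) (a b : ℕ) :
    prefWord u (a + b) = prefWord u a ++ (List.range b).map (fun j => u (a + j)) := by
  simp [prefWord, List.range_add, List.map_map, Function.comp]

end Stmt10Aux

/-- in the simple Parry case, if `B Aᵏ B` is a factor of `u_β`,
then `k = p` or `k = q + p`. -/
theorem stmt10 (p q : ℕ) (hq : 1 ≤ q) (hpq : q ≤ p)
    (φ : Bool → List Bool) (hφ : φ = simpleM p q)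
    (ub : ℕ → Bool) (hub : ∀ m, IsPrefixOf (iterW φ m false) ub)
    (k : ℕ)
    (hfac : IsFactor ub (true :: (List.replicate k false ++ [true]))) :
    k = p ∨ k = q + p := by
  subst hφ
  have hp : 1 ≤ p := le_trans hq hpq
  obtain ⟨i, hi⟩ := hfac
  have hL : (true :: (List.replicate k false ++ [true])).length = k + 2 := by simp
  have hi' : List.map (fun j => ub (i + j)) (List.range (k + 2)) =
      true :: (List.replicate k false ++ [true]) := by
    rw [← hL]; exact hi.symm
  set m := i + k + 2 with hm
  have hlen := Stmt10Aux.iterW_len p q hp hq (m + 2)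
  have hpre := hub (m + 2)
  rw [IsPrefixOf] at hpre
  set n := (iterW (simpleM p q) (m + 2) false).length with hn
  obtain ⟨r, hrn⟩ : ∃ r, n = (i + (k + 2)) + r := ⟨n - (i + (k + 2)), by omega⟩
  have hsplit : applyM (simpleM p q) (iterW (simpleM p q) (m + 1) false) =
      (prefWord ub i ++ (true :: (List.replicate k false ++ [true]))) ++
        (List.range r).map (fun j => ub (i + (k + 2) + j)) := by
    rw [← Stmt10Aux.iterW_succ, hpre, hrn, Stmt10Aux.prefWord_add,
      Stmt10Aux.prefWord_add, hi']
  refine Stmt10Aux.gap p q hp hq (iterW (simpleM p q) (m + 1) false) (prefWord ub i)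
    ((List.range r).map (fun j => ub (i + (k + 2) + j))) k hsplit ?_
  intro s' t' hw
  refine Stmt10Aux.nobb p q hp hq (iterW (simpleM p q) m false) s' t' ?_
  rw [← Stmt10Aux.iterW_succ]
  exact hw
end

section
/- Let φ be the morphism φ(A) = A^p B, φ(B) = A^q with p ≥ q > 1. Define w^(0) = B and w^(n) for n ≥ 1 by A^p · w^(n) = φ^2(w^(n-1)). Then for all n ≥ 0, w^(n) = B · φ(A^{q-1}) · φ^3(A^{q-1}) · φ^5(A^{q-1}) ⋯ φ^{2n-1}(A^{q-1}), and w^(n) is a suffix of φ^{2n}(B). -/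
lemma applyM_join (φ : Bool → List Bool) (L : List (List Bool)) :
    applyM φ L.flatten = (L.map (applyM φ)).flatten := by
  induction L with
  | nil => simp [applyM]
  | cons h t ih => simp [applyM_append, ih]

lemma applyM_suffix (φ : Bool → List Bool) {u v : List Bool} (h : u <:+ v) :
    applyM φ u <:+ applyM φ v := by
  obtain ⟨t, rfl⟩ := h
  exact ⟨applyM φ t, (applyM_append φ t u).symm⟩

lemma key_step (p q : ℕ) (hq : 1 ≤ q) (n : ℕ) :
    applyM (simpleM p q) (applyM (simpleM p q) (wSim (simpleM p q) q n)) =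
      List.replicate p false ++ wSim (simpleM p q) q (n+1) := by
  set φ := simpleM p q with hφ
  set f : ℕ → List Bool := fun k => (applyM φ)^[2*k+1] (List.replicate (q-1) false) with hf
  have hsq : applyM φ [true] = List.replicate q false := by
    simp [applyM, hφ, simpleM]
  have hrep : List.replicate q (false : Bool) = false :: List.replicate (q-1) false := by
    conv_lhs => rw [show q = (q-1) + 1 by omega]
    simp [List.replicate_succ]
  have h1 : applyM φ (applyM φ [true]) =
      List.replicate p false ++ [true] ++ f 0 := by
    rw [hsq, hrep]
    have : applyM φ (false :: List.replicate (q-1) false)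
        = (List.replicate p false ++ [true]) ++ applyM φ (List.replicate (q-1) false) := by
      simp [applyM, hφ, simpleM]
    rw [this, hf]
    simp
  have hit : ∀ m (x : List Bool), applyM φ (applyM φ ((applyM φ)^[m] x)) = (applyM φ)^[m+2] x := by
    intro m x
    rw [show m + 2 = m + 1 + 1 from rfl, Function.iterate_succ_apply', Function.iterate_succ_apply']
  have h2 : ∀ k, applyM φ (applyM φ (f k)) = f (k+1) := by
    intro k
    simp only [hf]
    rw [hit, show 2*k+1+2 = 2*(k+1)+1 by ring]
  have hws : wSim φ q n = [true] ++ ((List.range n).map f).flatten := by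
    simp [wSim, hf]
  rw [hws, applyM_append, applyM_append, applyM_join, applyM_join, h1]
  have hmj : ((((List.range n).map f).map (applyM φ)).map (applyM φ)) =
      (List.range n).map (fun k => f (k+1)) := by
    simp only [List.map_map]
    exact List.map_congr_left (fun k _ => h2 k)
  rw [hmj]
  have hws1 : wSim φ q (n+1) = true :: (f 0 ++ ((List.range n).map (fun k => f (k+1))).flatten) := by
    simp only [wSim, hf]
    rw [List.range_succ_eq_map]
    simp [List.flatten, Function.comp_def, Nat.succ_eq_add_one]
  rw [hws1]
  simp

/-- in the simple case with `q > 1`, the words defined by `w⁽⁰⁾ = B`,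
`Aᵖ·w⁽ⁿ⁾ = φ²(w⁽ⁿ⁻¹⁾)` satisfy
`w⁽ⁿ⁾ = B·φ(A^{q-1})·φ³(A^{q-1})⋯φ^{2n-1}(A^{q-1})`, and `w⁽ⁿ⁾` is a suffix of `φ^{2n}(B)`. -/
theorem stmt11 (p q : ℕ) (hq : 1 < q) (hpq : q ≤ p)
    (φ : Bool → List Bool) (hφ : φ = simpleM p q)
    (w : ℕ → List Bool) (hw0 : w 0 = [true])
    (hwrec : ∀ n, List.replicate p false ++ w (n+1) = applyM φ (applyM φ (w n))) :
    ∀ n, w n = wSim φ q n ∧ w n <:+ iterW φ (2*n) true := by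
  intro n
  induction n with
  | zero =>
    constructor
    · simp [hw0, wSim]
    · simp [hw0, iterW]
  | succ n ih =>
    obtain ⟨heq, hsuf⟩ := ih
    have hk := key_step p q (le_of_lt hq) n
    have hrec := hwrec n
    rw [heq, hφ, hk] at hrec
    have heq' : w (n+1) = wSim φ q (n+1) := by
      rw [hφ]; exact List.append_cancel_left hrec
    refine ⟨heq', ?_⟩
    have h1 : w (n+1) <:+ applyM φ (applyM φ (w n)) :=
      ⟨List.replicate p false, hwrec n⟩
    have h2 : applyM φ (applyM φ (w n)) <:+ iterW φ (2*(n+1)) true := by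
      have : iterW φ (2*(n+1)) true = applyM φ (applyM φ (iterW φ (2*n) true)) := by
        simp only [iterW]
        rw [show 2*(n+1) = (2*n) + 1 + 1 by ring]
        rw [Function.iterate_succ_apply', Function.iterate_succ_apply']
      rw [this]
      exact applyM_suffix φ (applyM_suffix φ hsuf)
    exact h1.trans h2
end

section
/- Let φ be the morphism φ(A) = A^p B, φ(B) = A^q with p ≥ q > 1, let u_β be its fixed point, and define w = lim w^(N) and v = lim v^(N), where w^(0) = B, A^p w^(n) = φ^2(w^(n-1)), and v^(n) = φ(w^(n)). Then for every factor u of u_β, if ŵ and v̂ denote the prefixes of w and v respectively of length |u|, one has |ŵ|_B ≥ |u|_B ≥ |v̂|_B. In other words, among all factors of u_β of a given length, the prefix of w maximizes and the prefix of v minimizes the number of occurrences of B. -/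
namespace S14

@[simp] lemma applyM_nil (φ : Bool → List Bool) : applyM φ [] = [] := rfl
@[simp] lemma applyM_cons (φ : Bool → List Bool) (a : Bool) (x : List Bool) :
    applyM φ (a :: x) = φ a ++ applyM φ x := by simp [applyM]
@[simp] lemma applyM_append (φ : Bool → List Bool) (x y : List Bool) :
    applyM φ (x ++ y) = applyM φ x ++ applyM φ y := by simp [applyM]
@[simp] lemma applyM_singleton (φ : Bool → List Bool) (a : Bool) :
    applyM φ [a] = φ a := by simp [applyM]

@[simp] lemma countA_nil : countA [] = 0 := rfl
@[simp] lemma countB_nil : countB [] = 0 := rfl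
@[simp] lemma countA_append (x y : List Bool) : countA (x ++ y) = countA x + countA y :=
  List.count_append
@[simp] lemma countB_append (x y : List Bool) : countB (x ++ y) = countB x + countB y :=
  List.count_append
@[simp] lemma countA_replicate_false (n : ℕ) : countA (List.replicate n false) = n := by
  simp [countA]
@[simp] lemma countB_replicate_false (n : ℕ) : countB (List.replicate n false) = 0 := by
  simp [countB, List.count_replicate]
@[simp] lemma countA_cons (a : Bool) (x : List Bool) :
    countA (a :: x) = countA x + if a = false then 1 else 0 := by
  simp [countA, List.count_cons]
@[simp] lemma countB_cons (a : Bool) (x : List Bool) :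
    countB (a :: x) = countB x + if a = true then 1 else 0 := by
  simp [countB, List.count_cons]

lemma countA_add_countB (x : List Bool) : countA x + countB x = x.length := by
  induction x with
  | nil => rfl
  | cons a x ih => cases a <;> simp <;> omega

lemma countB_le_length (x : List Bool) : countB x ≤ x.length := List.count_le_length

lemma countB_mono {x y : List Bool} (h : x <+: y) : countB x ≤ countB y :=
  List.Sublist.count_le _ h.sublist
lemma countB_mono_infix {x y : List Bool} (h : x <:+: y) : countB x ≤ countB y :=
  List.Sublist.count_le _ h.sublist

section PQ
variable (p q : ℕ)

@[simp] lemma simpleM_false : simpleM p q false = List.replicate p false ++ [true] := rfl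
@[simp] lemma simpleM_true : simpleM p q true = List.replicate q false := rfl

@[simp] lemma length_simpleM_false : (simpleM p q false).length = p + 1 := by simp
@[simp] lemma length_simpleM_true : (simpleM p q true).length = q := by simp
@[simp] lemma countB_simpleM_false : countB (simpleM p q false) = 1 := by simp
@[simp] lemma countB_simpleM_true : countB (simpleM p q true) = 0 := by simp
@[simp] lemma countA_simpleM_false : countA (simpleM p q false) = p := by simp [countA]
@[simp] lemma countA_simpleM_true : countA (simpleM p q true) = q := by simp

lemma countB_applyM (y : List Bool) : countB (applyM (simpleM p q) y) = countA y := by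
  induction y with
  | nil => rfl
  | cons a y ih => cases a <;> simp [ih]

lemma length_applyM (y : List Bool) :
    (applyM (simpleM p q) y).length = (p+1) * countA y + q * countB y := by
  induction y with
  | nil => rfl
  | cons a y ih => cases a <;> simp [ih] <;> ring

lemma length_applyM_ge (y : List Bool) (hq : 1 ≤ q) :
    y.length ≤ (applyM (simpleM p q) y).length := by
  rw [length_applyM, ← countA_add_countB y]
  have h1 : countA y ≤ (p+1) * countA y := Nat.le_mul_of_pos_left _ (by omega)
  have h2 : countB y ≤ q * countB y := Nat.le_mul_of_pos_left _ (by omega)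
  omega

lemma length_applyM_ge2 (y : List Bool) (hp : 1 ≤ p) (hq : 2 ≤ q) :
    2 * y.length ≤ (applyM (simpleM p q) y).length := by
  rw [length_applyM, ← countA_add_countB y]
  have h1 : 2 * countA y ≤ (p+1) * countA y := Nat.mul_le_mul_right _ (by omega)
  have h2 : 2 * countB y ≤ q * countB y := Nat.mul_le_mul_right _ (by omega)
  omega

/-- proper `take`s of blocks have no `B`. -/
lemma countB_take_blk {c : Bool} {m : ℕ} (h : m < (simpleM p q c).length ∨ c = true) :
    countB ((simpleM p q c).take m) = 0 := by
  cases c with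
  | true => simp [List.take_replicate, countB, List.count_replicate]
  | false =>
    simp at h
    rw [simpleM_false, List.take_append_of_le_length (by simp; omega)]
    have : (List.replicate p false).take m = List.replicate (min m p) false := by
      simp [List.take_replicate]
    rw [this]; simp

lemma countB_suffix_false {s : List Bool} (h : s <:+ simpleM p q false) (hne : s ≠ []) :
    countB s = 1 ∧ s.length ≤ p + 1 := by
  obtain ⟨pre, hpre⟩ := h
  have hlen : pre.length + s.length = p + 1 := by
    have := congrArg List.length hpre; simpa using this
  have hpre' : pre = (simpleM p q false).take pre.length := by
    rw [← hpre]; simp [List.take_append_of_le_length]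
  have h0 : countB pre = 0 := by
    rw [hpre']; exact countB_take_blk p q (Or.inl (by simp; have := List.length_pos_iff.2 hne; omega))
  have := congrArg countB hpre
  simp [h0] at this
  constructor
  · omega
  · omega

lemma countB_suffix_true {s : List Bool} (h : s <:+ simpleM p q true) :
    countB s = 0 ∧ s.length ≤ q := by
  constructor
  · have := List.Sublist.count_le true h.sublist
    simpa [countB] using Nat.le_zero.1 (le_trans this (by simp [List.count_replicate]))
  · have := h.length_le; simpa using this

end PQ
end S14

namespace S14
section PQ
variable (p q : ℕ)

/-! ### wSim structure -/

lemma wSim_zero (φ : Bool → List Bool) : wSim φ q 0 = [true] := by simp [wSim]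

lemma wSim_succ (φ : Bool → List Bool) (N : ℕ) :
    wSim φ q (N+1) = wSim φ q N ++ (applyM φ)^[2*N+1] (List.replicate (q-1) false) := by
  simp [wSim, List.range_succ]

lemma length_iter_ge (hp : 1 ≤ p) (hq : 1 ≤ q) (m : ℕ) (z : List Bool) :
    z.length ≤ ((applyM (simpleM p q))^[m] z).length := by
  induction m with
  | zero => simp
  | succ m ih =>
    rw [Function.iterate_succ_apply']
    exact le_trans ih (length_applyM_ge p q _ hq)

lemma length_wSim_ge (hp : 1 ≤ p) (hq : 2 ≤ q) (N : ℕ) :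
    N + 1 ≤ (wSim (simpleM p q) q N).length := by
  induction N with
  | zero => simp [wSim_zero]
  | succ N ih =>
    rw [wSim_succ]
    have h1 : 1 ≤ ((applyM (simpleM p q))^[2*N+1] (List.replicate (q-1) false)).length := by
      have h2 := length_iter_ge p q hp (by omega) (2*N+1) (List.replicate (q-1) false)
      rw [List.length_replicate] at h2; omega
    simp only [List.length_append]
    omega

/-- key identity : `φ²(w⁽ᴺ⁾) = Aᵖ · w⁽ᴺ⁺¹⁾`. -/
lemma phi2_wSim (hp : 1 ≤ p) (hq : 1 ≤ q) (N : ℕ) :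
    applyM (simpleM p q) (applyM (simpleM p q) (wSim (simpleM p q) q N))
      = List.replicate p false ++ wSim (simpleM p q) q (N+1) := by
  induction N with
  | zero =>
    rw [wSim_zero]
    have h1 : wSim (simpleM p q) q 1 = true :: applyM (simpleM p q) (List.replicate (q-1) false) := by
      rw [wSim_succ, wSim_zero]; simp
    rw [h1]
    have h2 : applyM (simpleM p q) [true] = List.replicate q false := by simp
    rw [h2]
    have h3 : List.replicate q false = false :: List.replicate (q-1) false := by
      rw [← List.replicate_succ]; congr 1; omega
    rw [h3]
    simp
  | succ N ih =>
    have e1 : (applyM (simpleM p q))^[2*(N+1)+1] (List.replicate (q-1) false)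
        = applyM (simpleM p q) (applyM (simpleM p q)
          ((applyM (simpleM p q))^[2*N+1] (List.replicate (q-1) false))) := by
      have e : 2*(N+1)+1 = (2*N+1) + 1 + 1 := by ring
      rw [e, Function.iterate_succ_apply', Function.iterate_succ_apply']
    conv_lhs => rw [wSim_succ]
    rw [applyM_append, applyM_append, ih]
    conv_rhs => rw [wSim_succ]
    rw [e1, List.append_assoc]

/-! ### decomposition lemmas -/

lemma decompPrefix (hq : 1 < q) (hpq : q ≤ p) :
    ∀ (y x r : List Bool), applyM (simpleM p q) y = x ++ r →
    ∃ y2 t, (y2 <+: y) ∧ x = applyM (simpleM p q) y2 ++ t ∧ countB t = 0 ∧ t.length ≤ p := by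
  intro y
  induction y with
  | nil =>
    intro x r h
    simp at h
    exact ⟨[], [], List.nil_prefix, by simp [h.1], by simp⟩
  | cons c y' ih =>
    intro x r h
    rw [applyM_cons] at h
    by_cases hx : x.length < (simpleM p q c).length
    · refine ⟨[], x, List.nil_prefix, by simp, ?_, ?_⟩
      · have hxt : x = (simpleM p q c).take x.length := by
          have : x = ((simpleM p q c) ++ applyM (simpleM p q) y').take x.length := by
            rw [h]; simp [List.take_append_of_le_length]
          rwa [List.take_append_of_le_length (le_of_lt hx)] at this
        rw [hxt]; exact countB_take_blk p q (Or.inl hx)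
      · cases c with
        | false => simp at hx; omega
        | true => simp at hx; omega
    · push_neg at hx
      have htake : (simpleM p q c) = x.take (simpleM p q c).length := by
        have := congrArg (List.take (simpleM p q c).length) h
        rw [List.take_append_of_le_length (le_refl _), List.take_append_of_le_length hx] at this
        simpa using this
      have hdrop : applyM (simpleM p q) y' = x.drop (simpleM p q c).length ++ r := by
        have := congrArg (List.drop (simpleM p q c).length) h
        rw [List.drop_append_of_le_length (le_refl _), List.drop_append_of_le_length hx] at this
        simpa using this
      obtain ⟨y2, t, hy2, hx2, hct, hlt⟩ := ih _ _ hdrop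
      refine ⟨c :: y2, t, List.cons_prefix_cons.2 ⟨rfl, hy2⟩, ?_, hct, hlt⟩
      rw [applyM_cons, List.append_assoc, ← hx2]
      conv_lhs => rw [← List.take_append_drop (simpleM p q c).length x]
      rw [← htake]

lemma decompFactor (hq : 1 < q) (hpq : q ≤ p) :
    ∀ (y l x r : List Bool), applyM (simpleM p q) y = l ++ x ++ r →
    (∃ c, x <:+: simpleM p q c) ∨
    (∃ c y2 s t, ((c :: y2) <:+: y) ∧ x = s ++ applyM (simpleM p q) y2 ++ t ∧ s ≠ [] ∧
      (s <:+ simpleM p q c) ∧ countB t = 0 ∧ t.length ≤ p) ∨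
    (∃ y2 t, (y2 <:+: y) ∧ x = applyM (simpleM p q) y2 ++ t ∧ countB t = 0 ∧ t.length ≤ p) := by
  intro y
  induction y with
  | nil =>
    intro l x r h
    simp at h
    exact Or.inr (Or.inr ⟨[], [], List.nil_infix, by simp [h.2.1], by simp⟩)
  | cons c y' ih =>
    intro l x r h
    rw [applyM_cons] at h
    by_cases hl : (simpleM p q c).length ≤ l.length
    · -- recurse
      have hdrop : applyM (simpleM p q) y' = l.drop (simpleM p q c).length ++ x ++ r := by
        have := congrArg (List.drop (simpleM p q c).length) h
        rw [List.drop_append_of_le_length (le_refl _)] at this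
        rw [List.append_assoc] at this
        rw [List.drop_append_of_le_length hl] at this
        simpa [List.append_assoc] using this
      rcases ih _ _ _ hdrop with h1 | ⟨c', y2, s, t, hinf, rest⟩ | ⟨y2, t, hinf, rest⟩
      · exact Or.inl h1
      · exact Or.inr (Or.inl ⟨c', y2, s, t, List.infix_cons hinf, rest⟩)
      · exact Or.inr (Or.inr ⟨y2, t, List.infix_cons hinf, rest⟩)
    · push_neg at hl
      set s : List Bool := (simpleM p q c).drop l.length with hs
      have hslen : s.length = (simpleM p q c).length - l.length := by
        rw [hs]; exact List.length_drop
      have hspos : 0 < s.length := by omega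
      have hssfx : s <:+ simpleM p q c := List.drop_suffix _ _
      have hxr : s ++ applyM (simpleM p q) y' = x ++ r := by
        have h2 := congrArg (List.drop l.length) h
        rw [List.drop_append_of_le_length (le_of_lt hl)] at h2
        rw [List.append_assoc, List.drop_left] at h2
        exact h2
      by_cases hxs : x.length ≤ s.length
      · -- x is an infix of a single block
        left
        refine ⟨c, ?_⟩
        have hxp : x <+: s := by
          have h3 := congrArg (List.take x.length) hxr
          rw [List.take_append_of_le_length hxs, List.take_left] at h3
          rw [List.prefix_iff_eq_take]
          exact h3.symm
        exact hxp.isInfix.trans hssfx.isInfix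
      · push_neg at hxs
        have hsx : x.take s.length = s := by
          have h3 := congrArg (List.take s.length) hxr
          rw [List.take_left, List.take_append_of_le_length (le_of_lt hxs)] at h3
          exact h3.symm
        have hrest : applyM (simpleM p q) y' = x.drop s.length ++ r := by
          have h3 := congrArg (List.drop s.length) hxr
          rw [List.drop_left, List.drop_append_of_le_length (le_of_lt hxs)] at h3
          exact h3
        obtain ⟨y2, t, hy2pre, hx2, hct, hlt⟩ := decompPrefix p q hq hpq y' _ _ hrest
        refine Or.inr (Or.inl ⟨c, y2, s, t, ?_, ?_, List.ne_nil_of_length_pos hspos, hssfx, hct, hlt⟩)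
        · exact (List.cons_prefix_cons.2 ⟨rfl, hy2pre⟩).isInfix
        · conv_lhs => rw [← List.take_append_drop s.length x]
          rw [hsx, hx2, List.append_assoc]
end PQ
end S14

namespace S14

/-! ### prefWord generalities -/

@[simp] lemma prefWord_zero (u : ℕ → Bool) : prefWord u 0 = [] := rfl
@[simp] lemma prefWord_length (u : ℕ → Bool) (n : ℕ) : (prefWord u n).length = n := by
  simp [prefWord]
lemma prefWord_succ (u : ℕ → Bool) (n : ℕ) :
    prefWord u (n+1) = prefWord u n ++ [u n] := by simp [prefWord, List.range_succ]
lemma prefWord_take (u : ℕ → Bool) {n m : ℕ} (h : n ≤ m) :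
    (prefWord u m).take n = prefWord u n := by
  simp only [prefWord, ← List.map_take, List.take_range]
  rw [min_eq_left h]
lemma prefWord_prefix (u : ℕ → Bool) {n m : ℕ} (h : n ≤ m) :
    prefWord u n <+: prefWord u m := by
  rw [← prefWord_take u h]; exact List.take_prefix _ _
lemma prefix_eq_prefWord {u : ℕ → Bool} {m : ℕ} {x : List Bool}
    (h : x <+: prefWord u m) : x = prefWord u x.length := by
  have hl : x.length ≤ m := by have := h.length_le; simpa using this
  rw [List.prefix_iff_eq_take] at h
  rw [h, prefWord_take u hl]
  simp
lemma prefWord_add (u : ℕ → Bool) (a b : ℕ) :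
    prefWord u (a + b) = prefWord u a ++ (List.range b).map (fun i => u (a + i)) := by
  simp [prefWord, List.range_add]

/-! ### the factor predicate -/

def Fct (p q : ℕ) (x : List Bool) : Prop :=
  ∃ M l r, iterW (simpleM p q) M false = l ++ x ++ r

lemma iterW_succ (φ : Bool → List Bool) (M : ℕ) :
    iterW φ (M+1) false = applyM φ (iterW φ M false) := by
  simp [iterW, Function.iterate_succ_apply']

lemma applyM_prefix_mono (φ : Bool → List Bool) {x y : List Bool} (h : x <+: y) :
    applyM φ x <+: applyM φ y := by
  obtain ⟨w, hw⟩ := h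
  exact ⟨applyM φ w, by rw [← applyM_append, hw]⟩

section PQ2
variable (p q : ℕ)

lemma iterW_prefix (hp : 1 ≤ p) (M : ℕ) :
    iterW (simpleM p q) M false <+: iterW (simpleM p q) (M+1) false := by
  induction M with
  | zero =>
    rw [iterW_succ]
    show [false] <+: applyM (simpleM p q) [false]
    rw [applyM_singleton, simpleM_false]
    have : List.replicate p false = false :: List.replicate (p-1) false := by
      rw [← List.replicate_succ]; congr 1; omega
    rw [this]
    exact List.cons_prefix_cons.2 ⟨rfl, List.nil_prefix⟩
  | succ M ih =>
    rw [iterW_succ, iterW_succ]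
    exact applyM_prefix_mono _ ih

lemma Fct_bump (hp : 1 ≤ p) {x : List Bool} (h : Fct p q x) :
    ∃ M l r, applyM (simpleM p q) (iterW (simpleM p q) M false) = l ++ x ++ r := by
  obtain ⟨M, l, r, hM⟩ := h
  obtain ⟨w, hw⟩ := iterW_prefix p q hp M
  exact ⟨M, l, r ++ w, by rw [← iterW_succ, ← hw, hM]; simp⟩

lemma Fct_infix {x y : List Bool} (h : y <:+: x) (hx : Fct p q x) : Fct p q y := by
  obtain ⟨M, l, r, hM⟩ := hx
  obtain ⟨le, ri, hlr⟩ := h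
  exact ⟨M, l ++ le, ri ++ r, by rw [hM, ← hlr]; simp⟩

/-! ### counting functions of infinite words -/

def cB (u : ℕ → Bool) (n : ℕ) : ℕ := countB (prefWord u n)
def cA (u : ℕ → Bool) (n : ℕ) : ℕ := countA (prefWord u n)
def gl (p q : ℕ) (u : ℕ → Bool) (n : ℕ) : ℕ := (applyM (simpleM p q) (prefWord u n)).length

lemma cAB (u : ℕ → Bool) (n : ℕ) : cA u n + cB u n = n := by
  rw [cA, cB, countA_add_countB, prefWord_length]
lemma cB_succ (u : ℕ → Bool) (n : ℕ) :
    cB u (n+1) = cB u n + if u n = true then 1 else 0 := by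
  rw [cB, cB, prefWord_succ]; simp
lemma cA_succ (u : ℕ → Bool) (n : ℕ) :
    cA u (n+1) = cA u n + if u n = false then 1 else 0 := by
  rw [cA, cA, prefWord_succ]; cases hun : u n <;> simp [countA, hun]
lemma cB_mono (u : ℕ → Bool) {n m : ℕ} (h : n ≤ m) : cB u n ≤ cB u m :=
  countB_mono (prefWord_prefix u h)
lemma gl_formula (u : ℕ → Bool) (n : ℕ) :
    gl p q u n = (p+1) * cA u n + q * cB u n := by
  rw [gl, length_applyM]; rfl
@[simp] lemma gl_zero (u : ℕ → Bool) : gl p q u 0 = 0 := by simp [gl]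
lemma gl_succ (u : ℕ → Bool) (n : ℕ) :
    gl p q u (n+1) = gl p q u n + (simpleM p q (u n)).length := by
  rw [gl, gl, prefWord_succ, applyM_append]
  simp
lemma gl_lower (hp : 1 ≤ p) (hq : 1 ≤ q) (u : ℕ → Bool) (n : ℕ) : n ≤ gl p q u n := by
  rw [gl]
  calc n = (prefWord u n).length := (prefWord_length u n).symm
  _ ≤ _ := length_applyM_ge p q _ hq
lemma gl_mono (u : ℕ → Bool) {n m : ℕ} (h : n ≤ m) : gl p q u n ≤ gl p q u m := by
  rw [gl, gl]
  exact (applyM_prefix_mono _ (prefWord_prefix u h)).length_le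

lemma exists_block (hp : 1 ≤ p) (hq : 1 ≤ q) (u : ℕ → Bool) (n : ℕ) :
    ∃ k', gl p q u k' ≤ n ∧ n < gl p q u (k'+1) := by
  classical
  have hP : ∃ j, n < gl p q u j := ⟨n+1, lt_of_lt_of_le (by omega) (gl_lower p q hp hq u (n+1))⟩
  have hj0 : n < gl p q u (Nat.find hP) := Nat.find_spec hP
  have hj0pos : Nat.find hP ≠ 0 := by
    intro h; rw [h, gl_zero] at hj0; omega
  refine ⟨Nat.find hP - 1, ?_, ?_⟩
  · have := Nat.find_min hP (m := Nat.find hP - 1) (by omega)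
    omega
  · have : Nat.find hP - 1 + 1 = Nat.find hP := by omega
    rw [this]; exact hj0

/-- discrete IVT for `cA`. -/
lemma ivt (u : ℕ → Bool) : ∀ k c, c ≤ cA u k → ∃ j, j ≤ k ∧ cA u j = c := by
  intro k
  induction k with
  | zero => intro c hc; simp [cA] at hc; exact ⟨0, le_refl _, by simp [cA, hc]⟩
  | succ k ih =>
    intro c hc
    rcases Nat.lt_or_ge (cA u k) c with h | h
    · refine ⟨k+1, le_refl _, ?_⟩
      have := cA_succ u k
      have h2 : cA u (k+1) ≤ cA u k + 1 := by rw [this]; split <;> omega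
      omega
    · obtain ⟨j, hj, hj2⟩ := ih c h
      exact ⟨j, by omega, hj2⟩

end PQ2
end S14

namespace S14
section Ctx
variable {p q : ℕ} {winf vinf : ℕ → Bool}

def wz (p : ℕ) (winf : ℕ → Bool) : ℕ → Bool := fun i => if i < p then false else winf (i - p)

lemma pw_wz (m : ℕ) : prefWord (wz p winf) (p + m) = List.replicate p false ++ prefWord winf m := by
  rw [prefWord_add]
  congr 1
  · rw [List.eq_replicate_iff]
    refine ⟨by simp [prefWord], ?_⟩
    intro b hb
    rw [prefWord] at hb
    obtain ⟨i, hi, rfl⟩ := List.mem_map.1 hb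
    rw [List.mem_range] at hi
    simp [wz, hi]
  · rw [prefWord]
    apply List.map_congr_left
    intro i hi
    simp only [wz]
    rw [if_neg (by omega)]
    congr 1
    omega

variable (hq : 1 < q) (hpq : q ≤ p)
variable (hwinf : ∀ N, IsPrefixOf (wSim (simpleM p q) q N) winf)
variable (hvinf : ∀ N, IsPrefixOf (applyM (simpleM p q) (wSim (simpleM p q) q N)) vinf)

include hq hpq hwinf hvinf

lemma R1 (k : ℕ) :
    applyM (simpleM p q) (prefWord winf k) = prefWord vinf (gl p q winf k) := by
  have hlw : k ≤ (wSim (simpleM p q) q k).length :=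
    le_trans (by omega) (length_wSim_ge p q (by omega) (by omega) k)
  have hw := hwinf k
  rw [IsPrefixOf] at hw
  have hpr : prefWord winf k ++ (wSim (simpleM p q) q k).drop k = wSim (simpleM p q) q k := by
    conv_rhs => rw [← List.take_append_drop k (wSim (simpleM p q) q k)]
    congr 1
    rw [hw, prefWord_take winf hlw]
  have h2 : applyM (simpleM p q) (prefWord winf k)
      ++ applyM (simpleM p q) ((wSim (simpleM p q) q k).drop k)
      = prefWord vinf (applyM (simpleM p q) (wSim (simpleM p q) q k)).length := by
    rw [← applyM_append, hpr]
    exact hvinf k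
  have h3 : applyM (simpleM p q) (prefWord winf k) <+: prefWord vinf _ := ⟨_, h2⟩
  exact prefix_eq_prefWord h3

lemma R2 (k : ℕ) :
    applyM (simpleM p q) (prefWord vinf k) = prefWord (wz p winf) (gl p q vinf k) := by
  have hlv : k ≤ (applyM (simpleM p q) (wSim (simpleM p q) q k)).length :=
    le_trans (le_trans (by omega) (length_wSim_ge p q (by omega) (by omega) k))
      (length_applyM_ge p q _ (by omega))
  have hv := hvinf k
  rw [IsPrefixOf] at hv
  have hpr : prefWord vinf k ++ (applyM (simpleM p q) (wSim (simpleM p q) q k)).drop k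
      = applyM (simpleM p q) (wSim (simpleM p q) q k) := by
    conv_rhs => rw [← List.take_append_drop k (applyM (simpleM p q) (wSim (simpleM p q) q k))]
    congr 1
    rw [hv, prefWord_take vinf hlv]
  have h2 : applyM (simpleM p q) (prefWord vinf k)
      ++ applyM (simpleM p q) ((applyM (simpleM p q) (wSim (simpleM p q) q k)).drop k)
      = List.replicate p false ++ wSim (simpleM p q) q (k+1) := by
    rw [← applyM_append, hpr]
    exact phi2_wSim p q (by omega) (by omega) k
  rw [(hwinf (k+1) : _ = _)] at h2
  rw [show (wSim (simpleM p q) q (k+1) : List Bool).length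
      = (wSim (simpleM p q) q (k+1)).length from rfl] at h2
  rw [← pw_wz] at h2
  exact prefix_eq_prefWord ⟨_, h2⟩

lemma F5 (n j : ℕ) (h : gl p q vinf j ≤ n + p) : cA vinf j ≤ cB winf n := by
  have h1 : countB (applyM (simpleM p q) (prefWord vinf j)) = cA vinf j := countB_applyM p q _
  have h2 : prefWord (wz p winf) (gl p q vinf j) <+: prefWord (wz p winf) (p + n) :=
    prefWord_prefix _ (by omega)
  have h3 : countB (prefWord (wz p winf) (p + n)) = cB winf n := by
    rw [pw_wz, countB_append, countB_replicate_false]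
    simp [cB]
  calc cA vinf j = countB (prefWord (wz p winf) (gl p q vinf j)) := by
        rw [← R2 hq hpq hwinf hvinf, h1]
    _ ≤ countB (prefWord (wz p winf) (p + n)) := countB_mono h2
    _ = cB winf n := h3

lemma F6 (n k' : ℕ) (h1 : gl p q winf k' ≤ n) (h2 : n < gl p q winf (k'+1)) :
    cB vinf n ≤ cA winf k' := by
  have hblk : prefWord vinf (gl p q winf (k'+1))
      = applyM (simpleM p q) (prefWord winf k') ++ simpleM p q (winf k') := by
    rw [← R1 hq hpq hwinf hvinf (k'+1), prefWord_succ, applyM_append, applyM_singleton]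
  have hpn : prefWord vinf n = (prefWord vinf (gl p q winf (k'+1))).take n :=
    (prefWord_take _ (le_of_lt h2)).symm
  rw [hblk, List.take_append] at hpn
  have hYlen : (applyM (simpleM p q) (prefWord winf k')).length = gl p q winf k' := rfl
  rw [List.take_of_length_le (by rw [hYlen]; exact h1)] at hpn
  have hglsucc := gl_succ p q winf k'
  have hsmall : countB ((simpleM p q (winf k')).take (n - (applyM (simpleM p q) (prefWord winf k')).length)) = 0 := by
    apply countB_take_blk
    left
    rw [hYlen]
    omega
  have : cB vinf n = cA winf k' := by
    rw [cB, hpn, countB_append, hsmall, countB_applyM]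
    rfl
  omega

lemma smallV (n : ℕ) (h : n ≤ p + q) : cB vinf n = 0 := by
  have hq2 : List.replicate (q-1) false = false :: List.replicate (q-2) false := by
    rw [← List.replicate_succ]; congr 1; omega
  have hp1 : List.replicate p false = false :: List.replicate (p-1) false := by
    rw [← List.replicate_succ]; congr 1; omega
  have hw1 : wSim (simpleM p q) q 1
      = true :: applyM (simpleM p q) (List.replicate (q-1) false) := by
    rw [wSim_succ, wSim_zero]
    simp
  have key : applyM (simpleM p q) (applyM (simpleM p q) (List.replicate (q-1) false))
      = List.replicate p false ++ ([true] ++ applyM (simpleM p q) (List.replicate (p-1) false)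
        ++ applyM (simpleM p q) [true]
        ++ applyM (simpleM p q) (applyM (simpleM p q) (List.replicate (q-2) false))) := by
    conv_lhs => rw [hq2, applyM_cons, applyM_append, simpleM_false, applyM_append, hp1,
      applyM_cons, simpleM_false]
    simp [List.append_assoc]
  obtain ⟨R, hZ⟩ : ∃ R, applyM (simpleM p q) (wSim (simpleM p q) q 1)
      = List.replicate q false ++ (List.replicate p false ++ R) := by
    refine ⟨[true] ++ applyM (simpleM p q) (List.replicate (p-1) false)
        ++ applyM (simpleM p q) [true]
        ++ applyM (simpleM p q) (applyM (simpleM p q) (List.replicate (q-2) false)), ?_⟩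
    rw [hw1, applyM_cons, simpleM_true, key]
  have hv := hvinf 1
  rw [IsPrefixOf] at hv
  have hlen : p + q ≤ (applyM (simpleM p q) (wSim (simpleM p q) q 1)).length := by
    rw [hZ]; simp; omega
  have hpn : prefWord vinf n = (applyM (simpleM p q) (wSim (simpleM p q) q 1)).take n := by
    conv_rhs => rw [hv]
    rw [prefWord_take vinf (le_trans h hlen)]
  rw [cB, hpn, hZ]
  rw [List.take_append, List.take_append]
  rw [countB_append, countB_append]
  have e1 : countB ((List.replicate q false).take n) = 0 := by
    rw [List.take_replicate]; simp
  have e2 : countB ((List.replicate p false).take (n - (List.replicate q false).length)) = 0 := by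
    rw [List.take_replicate]; simp
  have e3 : n - (List.replicate q false).length - (List.replicate p false).length = 0 := by
    simp; omega
  rw [e1, e2, e3]
  simp

omit hq hpq hvinf in
lemma drop_prefWord_succ (u : ℕ → Bool) (n : ℕ) : (prefWord u (n+1)).drop n = [u n] := by
  rw [prefWord_succ, List.drop_append_of_le_length (by simp),
    List.drop_eq_nil_of_le (by simp)]
  rfl

lemma winf0 : winf 0 = true := by
  have h := hwinf 0
  rw [wSim_zero, IsPrefixOf] at h
  have h1 : prefWord winf ([true] : List Bool).length = [winf 0] := by
    simp [prefWord, List.range_succ]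
  rw [h1] at h
  injection h with h2
  exact h2.symm

lemma cBw_pos (n : ℕ) (h : 1 ≤ n) : 1 ≤ cB winf n := by
  have h1 : cB winf 1 = 1 := by
    rw [cB]
    have : prefWord winf 1 = [winf 0] := by simp [prefWord, List.range_succ]
    rw [this, winf0 hq hpq hwinf hvinf]
    rfl
  calc 1 = cB winf 1 := h1.symm
    _ ≤ cB winf n := cB_mono winf h

lemma vinf0 : vinf 0 = false := by
  have h := smallV hq hpq hwinf hvinf 1 (by omega)
  rw [cB] at h
  have h1 : prefWord vinf 1 = [vinf 0] := by simp [prefWord, List.range_succ]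
  rw [h1] at h
  cases hv : vinf 0
  · rfl
  · rw [hv] at h; simp [countB] at h

end Ctx
end S14

namespace S14
section Ctx2
variable {p q : ℕ} {winf vinf : ℕ → Bool}
variable (hq : 1 < q) (hpq : q ≤ p)
variable (hwinf : ∀ N, IsPrefixOf (wSim (simpleM p q) q N) winf)
variable (hvinf : ∀ N, IsPrefixOf (applyM (simpleM p q) (wSim (simpleM p q) q N)) vinf)

include hq hpq hwinf hvinf

lemma upper0 (n e d : ℕ) (h1 : (p+1)*e + q*d ≤ n) (h2 : cB vinf (e+d) ≤ d) :
    e ≤ cB winf n := by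
  have hcab := cAB vinf (e+d)
  have he : e ≤ cA vinf (e+d) := by omega
  obtain ⟨j, hj, hjA⟩ := ivt vinf (e+d) e he
  have hjb : cB vinf j ≤ d := by have := cAB vinf j; omega
  have hglv : gl p q vinf j ≤ n + p := by
    rw [gl_formula, hjA]
    have hmul : q * cB vinf j ≤ q * d := Nat.mul_le_mul (le_refl q) hjb
    calc (p+1) * e + q * cB vinf j ≤ (p+1)*e + q*d := by omega
      _ ≤ n := h1
      _ ≤ n + p := Nat.le_add_right _ _
  have hF5 := F5 hq hpq hwinf hvinf n j hglv
  omega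

lemma upper1 (n e d : ℕ) (h1 : (p+1)*e + q*d + 1 ≤ n)
    (h2 : e + 1 ≤ cA vinf (e+d) ∨ (cA vinf (e+d) = e ∧ cB vinf (e+d) = d ∧ vinf (e+d) = false)) :
    e + 1 ≤ cB winf n := by
  rcases h2 with h2 | ⟨h2, h2b, h3⟩
  · obtain ⟨j, hj, hjA⟩ := ivt vinf (e+d) (e+1) h2
    have hjb : cB vinf j + 1 ≤ d := by
      have ha := cAB vinf j; omega
    have hglv : gl p q vinf j ≤ n + p := by
      rw [gl_formula, hjA]
      have hmul : q * (cB vinf j + 1) ≤ q * d := Nat.mul_le_mul (le_refl q) hjb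
      have hexp : q * (cB vinf j + 1) = q * cB vinf j + q := by ring
      have hexp2 : (p+1)*(e+1) = (p+1)*e + p + 1 := by ring
      rw [hexp2]
      linarith
    have hF5 := F5 hq hpq hwinf hvinf n j hglv
    omega
  · have hA1 : cA vinf (e+d+1) = e + 1 := by rw [cA_succ, h3, h2]; simp
    have hglv : gl p q vinf (e+d+1) ≤ n + p := by
      rw [gl_succ, h3, gl_formula, h2, h2b, length_simpleM_false]
      linarith
    have hF5 := F5 hq hpq hwinf hvinf n (e+d+1) hglv
    omega

lemma lowerAux (n e d sB sL tL : ℕ)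
    (hn : n = sL + ((p+1)*e + q*d) + tL)
    (hWd : d ≤ cB winf (e+d))
    (htL : tL ≤ p)
    (hcases : (sB = 1 ∧ sL ≤ p+1) ∨ (sB = 0 ∧ sL ≤ q)) :
    cB vinf n ≤ sB + e ∨
      (cB winf (e+d) = d ∧ winf (e+d) = false ∧ sB = 0 ∧ 1 ≤ sL) := by
  obtain ⟨Δ, hΔ⟩ := Nat.le.dest hWd
  have hcabk := cAB winf (e+d)
  have hAk : cA winf (e+d) + Δ = e := by omega
  have hglk : gl p q winf (e+d) + (p+1)*Δ = (p+1)*e + q*d + q*Δ := by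
    have he1 : (p+1)*e = (p+1)*(cA winf (e+d) + Δ) := by rw [hAk]
    have he1' : (p+1)*(cA winf (e+d) + Δ) = (p+1)*cA winf (e+d) + (p+1)*Δ := by ring
    have he2 : q * cB winf (e+d) = q*(d + Δ) := by rw [hΔ]
    have he2' : q*(d+Δ) = q*d + q*Δ := by ring
    rw [gl_formula]
    omega
  have hglkn : gl p q winf (e+d) ≤ (p+1)*e + q*d := by
    have hmul : q*Δ ≤ (p+1)*Δ := Nat.mul_le_mul (by omega) (le_refl Δ)
    omega
  obtain ⟨k', hk'1, hk'2⟩ := exists_block p q (by omega) (by omega) winf n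
  have hVn : cB vinf n ≤ cA winf k' := F6 hq hpq hwinf hvinf n k' hk'1 hk'2
  have hkk' : e + d ≤ k' := by
    by_contra hcon
    push_neg at hcon
    have hg1 : gl p q winf (k'+1) ≤ gl p q winf (e+d) := gl_mono p q winf (by omega)
    omega
  have hmid : prefWord winf k' = prefWord winf (e+d) ++ (prefWord winf k').drop (e+d) := by
    conv_lhs => rw [← List.take_append_drop (e+d) (prefWord winf k')]
    rw [prefWord_take winf hkk']
  have hcA' : cA winf k' = cA winf (e+d) + countA ((prefWord winf k').drop (e+d)) := by
    rw [cA, cA]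
    conv_lhs => rw [hmid]
    rw [countA_append]
  have hcB' : cB winf k' = cB winf (e+d) + countB ((prefWord winf k').drop (e+d)) := by
    rw [cB, cB]
    conv_lhs => rw [hmid]
    rw [countB_append]
  have hglk' : gl p q winf k' = gl p q winf (e+d)
      + ((p+1) * countA ((prefWord winf k').drop (e+d))
         + q * countB ((prefWord winf k').drop (e+d))) := by
    rw [gl, gl]
    conv_lhs => rw [hmid]
    rw [applyM_append, List.length_append, length_applyM, length_applyM]
  have hbud : (p+1)*countA ((prefWord winf k').drop (e+d))
      + q*countB ((prefWord winf k').drop (e+d)) + q*Δ ≤ sL + tL + (p+1)*Δ := by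
    omega
  rcases hcases with ⟨hsB, hsL⟩ | ⟨hsB, hsL⟩
  · -- s contains a B
    left
    have ha : countA ((prefWord winf k').drop (e+d)) ≤ Δ + 1 := by
      by_contra hcon
      push_neg at hcon
      have hmul : (p+1)*Δ + 2*p + 2 ≤ (p+1)*countA ((prefWord winf k').drop (e+d)) := by
        have h5 : (p+1)*(Δ+2) ≤ (p+1)*countA ((prefWord winf k').drop (e+d)) :=
          Nat.mul_le_mul (le_refl _) (by omega)
        have h6 : (p+1)*(Δ+2) = (p+1)*Δ + 2*p + 2 := by ring
        omega
      omega
    omega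
  · -- s has no B
    by_cases ha : countA ((prefWord winf k').drop (e+d)) ≤ Δ
    · left; omega
    · push_neg at ha
      right
      have hmul : (p+1)*Δ + p + 1 ≤ (p+1)*countA ((prefWord winf k').drop (e+d)) := by
        have h5 : (p+1)*(Δ+1) ≤ (p+1)*countA ((prefWord winf k').drop (e+d)) :=
          Nat.mul_le_mul (le_refl _) (by omega)
        have h6 : (p+1)*(Δ+1) = (p+1)*Δ + p + 1 := by ring
        omega
      have hb0 : countB ((prefWord winf k').drop (e+d)) = 0 := by
        by_contra hb
        have h7 : q ≤ q * countB ((prefWord winf k').drop (e+d)) :=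
          Nat.le_mul_of_pos_right q (by omega)
        omega
      have hΔ0 : Δ = 0 := by
        by_contra hΔ'
        have h7 : q ≤ q * Δ := Nat.le_mul_of_pos_right q (by omega)
        omega
      have hv0 : q * countB ((prefWord winf k').drop (e+d)) = 0 := by
        rw [hb0, Nat.mul_zero]
      have hi0 : (p+1)*Δ = 0 := by rw [hΔ0, Nat.mul_zero]
      have hj0 : q*Δ = 0 := by rw [hΔ0, Nat.mul_zero]
      have ha1 : countA ((prefWord winf k').drop (e+d)) = 1 := by
        by_contra ha'
        have h22 : 2 ≤ countA ((prefWord winf k').drop (e+d)) := by omega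
        have hmul2 : 2*p + 2 ≤ (p+1)*countA ((prefWord winf k').drop (e+d)) := by
          have h5 : (p+1)*2 ≤ (p+1)*countA ((prefWord winf k').drop (e+d)) :=
            Nat.mul_le_mul (le_refl _) h22
          have h6 : (p+1)*2 = 2*p+2 := by ring
          omega
        omega
      have hsL1 : 1 ≤ sL := by
        by_contra hsl'
        push_neg at hsl'
        omega
      have hab := countA_add_countB ((prefWord winf k').drop (e+d))
      rw [List.length_drop, prefWord_length] at hab
      have hk'k : k' = (e+d) + 1 := by omega
      have hwk : winf (e+d) = false := by
        rw [hk'k, drop_prefWord_succ hwinf winf (e+d)] at ha1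
        cases hwkc : winf (e+d)
        · rfl
        · rw [hwkc] at ha1; simp at ha1
      exact ⟨by omega, hwk, hsB, hsL1⟩

end Ctx2
end S14

namespace S14
section Core
variable {p q : ℕ} {winf vinf : ℕ → Bool}
variable (hq : 1 < q) (hpq : q ≤ p)
variable (hwinf : ∀ N, IsPrefixOf (wSim (simpleM p q) q N) winf)
variable (hvinf : ∀ N, IsPrefixOf (applyM (simpleM p q) (wSim (simpleM p q) q N)) vinf)

include hq hpq hwinf hvinf

theorem core : ∀ n (x : List Bool), Fct p q x → x.length = n →
    cB vinf n ≤ countB x ∧ countB x ≤ cB winf n := by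
  intro n
  induction n using Nat.strong_induction_on with
  | _ n IH =>
  intro x hF hlen
  obtain ⟨M, l, r, hM⟩ := Fct_bump p q (by omega) hF
  have hFiter : Fct p q (iterW (simpleM p q) M false) := ⟨M, [], [], by simp⟩
  rcases decompFactor p q hq hpq _ l x r hM with ⟨c, hinf⟩ |
    ⟨c, y2, s, t, hinf, hxe, hsne, hssfx, hct, hlt⟩ | ⟨y2, t, hinf, hxe, hct, hlt⟩
  · -- single block
    have hxB : countB x ≤ 1 := by
      refine le_trans (countB_mono_infix hinf) ?_
      cases c
      · simp
      · simp
    have hxn : n ≤ p + 1 := by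
      rw [← hlen]
      refine le_trans hinf.length_le ?_
      cases c
      · simp
      · simp; omega
    constructor
    · rw [smallV hq hpq hwinf hvinf n (by omega)]
      exact Nat.zero_le _
    · rcases Nat.eq_zero_or_pos (countB x) with h0 | h1
      · rw [h0]; exact Nat.zero_le _
      · have hn1 : 1 ≤ n := by
          have := countB_le_length x; omega
        have := cBw_pos hq hpq hwinf hvinf n hn1
        omega
  · -- case 2 : x = s ++ φ(y2) ++ t with s a nonempty suffix of φ(c)
    have hFcy : Fct p q (c :: y2) := Fct_infix p q hinf hFiter
    have hFy2 : Fct p q y2 := Fct_infix p q ⟨[c], [], by simp⟩ hFcy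
    have hcab : countA y2 + countB y2 = y2.length := countA_add_countB y2
    have hlen2 : s.length + ((p+1)*countA y2 + q*countB y2) + t.length = n := by
      rw [hxe] at hlen
      rw [List.length_append, List.length_append, length_applyM] at hlen
      omega
    have hsl1 : 1 ≤ s.length := List.length_pos_iff.2 hsne
    have h2e : 2*countA y2 ≤ (p+1)*countA y2 := Nat.mul_le_mul (by omega) (le_refl _)
    have h2d : 2*countB y2 ≤ q*countB y2 := Nat.mul_le_mul (by omega) (le_refl _)
    have hbnds : cB vinf y2.length ≤ countB y2 ∧ countB y2 ≤ cB winf y2.length := by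
      rcases Nat.eq_zero_or_pos y2.length with h0 | hpos
      · have hy2nil : y2 = [] := List.length_eq_zero_iff.1 h0
        subst hy2nil
        constructor <;> simp [cB, countB]
      · exact IH y2.length (by omega) y2 hFy2 rfl
    have hbnds1 : cB vinf (countA y2 + countB y2) ≤ countB y2 := by rw [hcab]; exact hbnds.1
    have hbnds2 : countB y2 ≤ cB winf (countA y2 + countB y2) := by rw [hcab]; exact hbnds.2
    cases c
    · -- c = A(false) : s contains one B
      obtain ⟨hsB, hsLen⟩ := countB_suffix_false p q hssfx hsne
      have hcx : countB x = 1 + countA y2 := by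
        rw [hxe, countB_append, countB_append, countB_applyM, hct, hsB]
        omega
      constructor
      · -- lower bound via lowerAux with sB = 1
        rcases lowerAux hq hpq hwinf hvinf n (countA y2) (countB y2) 1 s.length t.length
          (by omega) hbnds2 hlt (Or.inl ⟨rfl, hsLen⟩) with hlow | ⟨_, _, hbad, _⟩
        · omega
        · omega
      · -- upper bound via upper1
        have hup : countA y2 + 1 ≤ cB winf n := by
          apply upper1 hq hpq hwinf hvinf n (countA y2) (countB y2) (by omega)
          rcases Nat.lt_or_ge (cB vinf (countA y2 + countB y2)) (countB y2) with hlt' | hge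
          · left
            have := cAB vinf (countA y2 + countB y2)
            omega
          · have heq : cB vinf (countA y2 + countB y2) = countB y2 := by omega
            have hcAe : cA vinf (countA y2 + countB y2) = countA y2 := by
              have := cAB vinf (countA y2 + countB y2); omega
            cases hvk : vinf (countA y2 + countB y2)
            · right; exact ⟨hcAe, heq, rfl⟩
            · -- contradiction : A·y2 is a factor with too few B's
              exfalso
              have hk1 : 1 ≤ y2.length := by
                by_contra hk0
                push_neg at hk0
                have h00 : y2.length = 0 := by omega
                have hv0 := vinf0 hq hpq hwinf hvinf
                rw [hcab] at hvk
                rw [h00] at hvk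
                rw [hv0] at hvk
                exact Bool.noConfusion hvk
              have hklt : y2.length + 1 < n := by omega
              have hIH := (IH (y2.length + 1) hklt (false :: y2) hFcy (by simp)).1
              have hcnt : countB (false :: y2) = countB y2 := by simp
              have hcv : cB vinf (y2.length + 1) = cB vinf y2.length + 1 := by
                rw [cB_succ]
                rw [← hcab, hvk]
                simp [hcab]
              rw [hcnt, hcv] at hIH
              rw [hcab] at heq
              omega
        omega
    · -- c = B(true) : s has no B
      obtain ⟨hsB, hsLen⟩ := countB_suffix_true p q hssfx
      have hcx : countB x = countA y2 := by
        rw [hxe, countB_append, countB_append, countB_applyM, hct, hsB]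
        omega
      constructor
      · -- lower bound
        rcases lowerAux hq hpq hwinf hvinf n (countA y2) (countB y2) 0 s.length t.length
          (by omega) hbnds2 hlt (Or.inr ⟨rfl, hsLen⟩) with hlow | ⟨hWk, hwk, _, _⟩
        · omega
        · -- contradiction : B·y2 is a factor with too many B's
          exfalso
          have hk1 : 1 ≤ y2.length := by
            by_contra hk0
            push_neg at hk0
            have h00 : y2.length = 0 := by omega
            have hw0 := winf0 hq hpq hwinf hvinf
            rw [hcab, h00, hw0] at hwk
            exact Bool.noConfusion hwk
          have hklt : y2.length + 1 < n := by omega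
          have hIH := (IH (y2.length + 1) hklt (true :: y2) hFcy (by simp)).2
          have hcnt : countB (true :: y2) = countB y2 + 1 := by simp
          have hcw : cB winf (y2.length + 1) = cB winf y2.length := by
            rw [cB_succ]
            rw [← hcab, hwk]
            simp [hcab]
          rw [hcnt, hcw] at hIH
          rw [hcab] at hWk
          omega
      · -- upper bound
        have := upper0 hq hpq hwinf hvinf n (countA y2) (countB y2) (by omega) hbnds1
        omega
  · -- case 3 : x = φ(y2) ++ t
    have hFy2 : Fct p q y2 := Fct_infix p q hinf hFiter
    have hcab : countA y2 + countB y2 = y2.length := countA_add_countB y2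
    have hlen2 : ((p+1)*countA y2 + q*countB y2) + t.length = n := by
      rw [hxe] at hlen
      rw [List.length_append, length_applyM] at hlen
      omega
    have h2e : 2*countA y2 ≤ (p+1)*countA y2 := Nat.mul_le_mul (by omega) (le_refl _)
    have h2d : 2*countB y2 ≤ q*countB y2 := Nat.mul_le_mul (by omega) (le_refl _)
    have hbnds : cB vinf y2.length ≤ countB y2 ∧ countB y2 ≤ cB winf y2.length := by
      rcases Nat.eq_zero_or_pos y2.length with h0 | hpos
      · have hy2nil : y2 = [] := List.length_eq_zero_iff.1 h0
        subst hy2nil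
        constructor <;> simp [cB, countB]
      · exact IH y2.length (by omega) y2 hFy2 rfl
    have hbnds1 : cB vinf (countA y2 + countB y2) ≤ countB y2 := by rw [hcab]; exact hbnds.1
    have hbnds2 : countB y2 ≤ cB winf (countA y2 + countB y2) := by rw [hcab]; exact hbnds.2
    have hcx : countB x = countA y2 := by
      rw [hxe, countB_append, countB_applyM, hct]
      omega
    constructor
    · rcases lowerAux hq hpq hwinf hvinf n (countA y2) (countB y2) 0 0 t.length
        (by omega) hbnds2 hlt (Or.inr ⟨rfl, by omega⟩) with hlow | ⟨_, _, _, hbad⟩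
      · omega
      · omega
    · have := upper0 hq hpq hwinf hvinf n (countA y2) (countB y2) (by omega) hbnds1
      omega

end Core
end S14

namespace S14

lemma length_iterW {p q : ℕ} (hp : 1 ≤ p) (hq : 2 ≤ q) (m : ℕ) :
    m + 1 ≤ (iterW (simpleM p q) m false).length := by
  induction m with
  | zero => simp [iterW]
  | succ m ih =>
    rw [iterW_succ]
    have h2 := length_applyM_ge2 p q (iterW (simpleM p q) m false) hp hq
    omega

lemma Fct_of_IsFactor {p q : ℕ} (hp : 1 ≤ p) (hq : 2 ≤ q) {ub : ℕ → Bool}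
    (hub : ∀ m, IsPrefixOf (iterW (simpleM p q) m false) ub)
    {x : List Bool} (hx : IsFactor ub x) : Fct p q x := by
  obtain ⟨i, hi⟩ := hx
  set M := i + x.length with hM
  have hlen := length_iterW hp hq M
  have hubM := hub M
  rw [IsPrefixOf] at hubM
  set L := (iterW (simpleM p q) M false).length with hL
  have hiL : i + x.length ≤ L := by omega
  have hx2 : x = ((prefWord ub L).drop i).take x.length := by
    conv_lhs => rw [hi]
    apply List.ext_getElem
    · simp
      omega
    · intro j h1 h2
      simp [prefWord]
  have hinfix : x <:+: prefWord ub L := by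
    rw [hx2]
    exact (List.take_prefix _ _).isInfix.trans (List.drop_suffix _ _).isInfix
  rw [← hubM] at hinfix
  exact Fct_infix p q hinfix ⟨M, [], [], by simp⟩

end S14

/-- in the simple case with `q > 1`, the prefixes of `w = lim w⁽ᴺ⁾`
maximize and the prefixes of `v = lim φ(w⁽ᴺ⁾)` minimize the number of `B`'s among
factors of `u_β` of a given length. -/
theorem stmt14 (p q : ℕ) (hq : 1 < q) (hpq : q ≤ p)
    (φ : Bool → List Bool) (hφ : φ = simpleM p q)
    (ub : ℕ → Bool) (hub : ∀ m, IsPrefixOf (iterW φ m false) ub)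
    (winf vinf : ℕ → Bool)
    (hwinf : ∀ N, IsPrefixOf (wSim φ q N) winf)
    (hvinf : ∀ N, IsPrefixOf (applyM φ (wSim φ q N)) vinf)
    (u : List Bool) (hu : IsFactor ub u) :
    countB (prefWord vinf u.length) ≤ countB u ∧
      countB u ≤ countB (prefWord winf u.length) := by
  subst hφ
  have hF : S14.Fct p q u := S14.Fct_of_IsFactor (by omega) (by omega) hub hu
  exact S14.core hq hpq hwinf hvinf u.length u hF rfl
end
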